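/- arXiv:1604.00490 — 2 statements merged into one kernel-verified Lean document; each statement's English description precedes it below -/
import Mathlib

section
/- The function Z : ℂ → ℂ defined by Z(λ) = ∫_0^∞ x^λ e^{−x − 1/x} dx is entire, i.e., complex differentiable at every λ ∈ ℂ. -/
open MeasureTheory Set Real

lemma aux_int (c : ℝ) :
    IntegrableOn (fun x : ℝ => x ^ c * Real.exp (-x - 1 / x)) (Set.Ioi 0) := by
  set n : ℕ := ⌈-c⌉₊ with hn
  have hcn : 0 ≤ c + n := by
    have := Nat.le_ceil (-c)
    push_cast at this ⊢
    linarith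
  have hint : IntegrableOn (fun x : ℝ => ((Nat.factorial n) : ℝ) * (Real.exp (-x) * x ^ (c + n + 1 - 1)))
      (Set.Ioi 0) := (Real.GammaIntegral_convergent (by linarith)).const_mul _
  refine hint.mono' ?_ ?_
  · apply ContinuousOn.aestronglyMeasurable ?_ measurableSet_Ioi
    apply ContinuousOn.mul
    · exact ContinuousOn.rpow_const continuousOn_id (fun x hx => Or.inl (ne_of_gt hx))
    · exact (continuousOn_id.neg.sub (continuousOn_const.div continuousOn_id
        (fun x hx => ne_of_gt hx))).rexp
  · filter_upwards [ae_restrict_mem measurableSet_Ioi] with x hx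
    simp only [Set.mem_Ioi] at hx
    have hx0 : (0:ℝ) < x := hx
    have h1 : Real.exp (-(1/x)) ≤ (Nat.factorial n) * x ^ (n : ℕ) := by
      have hpow : ((1/x) ^ n) / (Nat.factorial n) ≤ Real.exp (1/x) :=
        Real.pow_div_factorial_le_exp (1/x) (by positivity) n
      rw [Real.exp_neg]
      rw [inv_le_comm₀ (Real.exp_pos _) (by positivity)]
      calc (((Nat.factorial n) : ℝ) * x ^ n)⁻¹ = ((1/x) ^ n) / (Nat.factorial n) := by
            field_simp
            rw [← mul_pow, mul_one_div_cancel hx0.ne', one_pow]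
        _ ≤ Real.exp (1/x) := hpow
    calc ‖x ^ c * Real.exp (-x - 1/x)‖ = x ^ c * (Real.exp (-x) * Real.exp (-(1/x))) := by
          rw [norm_mul, Real.norm_eq_abs, Real.norm_eq_abs, abs_of_pos (Real.rpow_pos_of_pos hx0 c),
            abs_of_pos (Real.exp_pos _), ← Real.exp_add]
          ring_nf
      _ ≤ x ^ c * (Real.exp (-x) * ((Nat.factorial n) * x ^ (n:ℕ))) := by
          have := mul_le_mul_of_nonneg_left h1 (Real.exp_pos (-x)).le
          exact mul_le_mul_of_nonneg_left (by linarith) (Real.rpow_pos_of_pos hx0 c).le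
      _ = (Nat.factorial n) * (Real.exp (-x) * x ^ (c + n + 1 - 1)) := by
          rw [add_sub_cancel_right, Real.rpow_add hx0, Real.rpow_natCast]
          ring

/-- The local zeta function `Z(λ) = ∫_0^∞ x^λ e^{−x−1/x} dx` is entire. -/
theorem statement15 :
    Differentiable ℂ
      (fun lam : ℂ =>
        ∫ x in Set.Ioi (0 : ℝ),
          Complex.exp (lam * Real.log x) * Real.exp (-x - 1 / x)) := by
  intro lam₀
  set a : ℝ := lam₀.re + 1 with ha
  set b : ℝ := lam₀.re - 1 with hb
  set F : ℂ → ℝ → ℂ := fun lam x =>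
    Complex.exp (lam * Real.log x) * Real.exp (-x - 1 / x) with hF
  set F' : ℂ → ℝ → ℂ := fun lam x =>
    Complex.exp (lam * Real.log x) * Real.log x * Real.exp (-x - 1 / x) with hF'
  set bound : ℝ → ℝ := fun x =>
    (x ^ (a + 1) + x ^ (a - 1) + x ^ (b + 1) + x ^ (b - 1)) * Real.exp (-x - 1 / x)
    with hbound
  have hmeas : ∀ lam : ℂ, AEStronglyMeasurable (F lam) (volume.restrict (Set.Ioi 0)) := by
    intro lam
    apply Measurable.aestronglyMeasurable
    apply Measurable.mul
    · exact (Complex.measurable_exp.comp ((measurable_const.mul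
        (Complex.measurable_ofReal.comp Real.measurable_log))))
    · exact Complex.measurable_ofReal.comp ((measurable_id.neg.sub
        (measurable_const.div measurable_id)).exp)
  have hmeas' : AEStronglyMeasurable (F' lam₀) (volume.restrict (Set.Ioi 0)) := by
    apply Measurable.aestronglyMeasurable
    apply Measurable.mul
    · apply Measurable.mul
      · exact (Complex.measurable_exp.comp ((measurable_const.mul
          (Complex.measurable_ofReal.comp Real.measurable_log))))
      · exact Complex.measurable_ofReal.comp Real.measurable_log
    · exact Complex.measurable_ofReal.comp ((measurable_id.neg.sub
        (measurable_const.div measurable_id)).exp)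
  -- norm computation
  have hnorm : ∀ (lam : ℂ) (x : ℝ), 0 < x →
      ‖Complex.exp (lam * Real.log x)‖ = x ^ lam.re := by
    intro lam x hx
    rw [Complex.norm_exp]
    rw [Real.rpow_def_of_pos hx]
    congr 1
    simp [mul_comm]
  -- exponent comparison on the ball
  have hcomp : ∀ (lam : ℂ), lam ∈ Metric.ball lam₀ 1 → ∀ x : ℝ, 0 < x →
      x ^ lam.re ≤ x ^ a + x ^ b := by
    intro lam hlam x hx
    have h1 : |lam.re - lam₀.re| < 1 := by
      have := Complex.abs_re_le_norm (lam - lam₀)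
      rw [Metric.mem_ball, Complex.dist_eq] at hlam
      simp only [Complex.sub_re] at this
      calc |lam.re - lam₀.re| ≤ ‖lam - lam₀‖ := this
        _ < 1 := hlam
    rw [abs_lt] at h1
    rcases le_or_gt 1 x with h | h
    · have : x ^ lam.re ≤ x ^ a :=
        Real.rpow_le_rpow_of_exponent_le h (by simp only [ha]; linarith [h1.2])
      have h2 : (0:ℝ) ≤ x ^ b := (Real.rpow_pos_of_pos hx b).le
      linarith
    · have : x ^ lam.re ≤ x ^ b :=
        Real.rpow_le_rpow_of_exponent_ge hx h.le (by simp only [hb]; linarith [h1.1])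
      have h2 : (0:ℝ) ≤ x ^ a := (Real.rpow_pos_of_pos hx a).le
      linarith
  have hlog : ∀ x : ℝ, 0 < x → |Real.log x| ≤ x + 1 / x := by
    intro x hx
    rcases le_or_gt 1 x with h | h
    · rw [abs_of_nonneg (Real.log_nonneg h)]
      have := Real.log_le_sub_one_of_pos hx
      have : (0:ℝ) < 1/x := by positivity
      nlinarith [Real.log_le_sub_one_of_pos hx]
    · rw [abs_of_nonpos (Real.log_nonpos hx.le h.le)]
      have h2 := Real.log_le_sub_one_of_pos (show (0:ℝ) < 1/x by positivity)
      rw [Real.log_div one_ne_zero (ne_of_gt hx), Real.log_one] at h2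
      nlinarith
  have hbound_int : Integrable bound (volume.restrict (Set.Ioi 0)) := by
    have h1 := aux_int (a + 1)
    have h2 := aux_int (a - 1)
    have h3 := aux_int (b + 1)
    have h4 := aux_int (b - 1)
    have := ((h1.add h2).add h3).add h4
    apply this.congr
    filter_upwards with x
    simp only [hbound, Pi.add_apply]
    ring
  have hbound_ae : ∀ᵐ x ∂(volume.restrict (Set.Ioi 0)),
      ∀ lam ∈ Metric.ball lam₀ 1, ‖F' lam x‖ ≤ bound x := by
    filter_upwards [ae_restrict_mem measurableSet_Ioi] with x hx lam hlam
    simp only [Set.mem_Ioi] at hx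
    have hxpos : (0:ℝ) < x := hx
    have : ‖F' lam x‖ = x ^ lam.re * |Real.log x| * Real.exp (-x - 1/x) := by
      simp only [hF', norm_mul, hnorm lam x hxpos, Complex.norm_real, Real.norm_eq_abs,
        abs_of_pos (Real.exp_pos _)]
    rw [this]
    have hcb := hcomp lam hlam x hxpos
    have hlb := hlog x hxpos
    have hexp : (0:ℝ) < Real.exp (-x - 1/x) := Real.exp_pos _
    have key : x ^ lam.re * |Real.log x| ≤
        x ^ (a+1) + x ^ (a-1) + x ^ (b+1) + x ^ (b-1) := by
      have h0 : (0:ℝ) ≤ x ^ lam.re := (Real.rpow_pos_of_pos hxpos _).le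
      have h5 : x ^ lam.re * |Real.log x| ≤ (x ^ a + x ^ b) * (x + 1/x) := by
        apply mul_le_mul hcb hlb (abs_nonneg _)
        positivity
      have e1 : x ^ a * x = x ^ (a+1) := (Real.rpow_add_one (ne_of_gt hxpos) a).symm
      have e2 : x ^ a * (1/x) = x ^ (a-1) := by
        rw [Real.rpow_sub_one (ne_of_gt hxpos) a]; ring
      have e3 : x ^ b * x = x ^ (b+1) := (Real.rpow_add_one (ne_of_gt hxpos) b).symm
      have e4 : x ^ b * (1/x) = x ^ (b-1) := by
        rw [Real.rpow_sub_one (ne_of_gt hxpos) b]; ring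
      calc x ^ lam.re * |Real.log x| ≤ (x ^ a + x ^ b) * (x + 1/x) := h5
        _ = x ^ a * x + x ^ a * (1/x) + x ^ b * x + x ^ b * (1/x) := by ring
        _ = x ^ (a+1) + x ^ (a-1) + x ^ (b+1) + x ^ (b-1) := by rw [e1, e2, e3, e4]
    simpa only [hbound] using mul_le_mul_of_nonneg_right key hexp.le
  have hF_int : Integrable (F lam₀) (volume.restrict (Set.Ioi 0)) := by
    apply (aux_int lam₀.re).mono' (hmeas lam₀)
    filter_upwards [ae_restrict_mem measurableSet_Ioi] with x hx
    simp only [Set.mem_Ioi] at hx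
    have : ‖F lam₀ x‖ = x ^ lam₀.re * Real.exp (-x - 1/x) := by
      simp only [hF, norm_mul, hnorm lam₀ x hx, Complex.norm_real, Real.norm_eq_abs,
        abs_of_pos (Real.exp_pos _)]
    exact le_of_eq this
  have hdiff : ∀ᵐ x ∂(volume.restrict (Set.Ioi 0)),
      ∀ lam ∈ Metric.ball lam₀ 1, HasDerivAt (fun l => F l x) (F' lam x) lam := by
    filter_upwards with x lam _
    have h1 : HasDerivAt (fun l : ℂ => l * (Real.log x : ℂ)) (Real.log x : ℂ) lam :=
      hasDerivAt_mul_const _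
    have h2 := h1.cexp
    have h3 := h2.mul_const ((Real.exp (-x - 1/x) : ℝ) : ℂ)
    convert h3 using 1
  have := hasDerivAt_integral_of_dominated_loc_of_deriv_le (Metric.ball_mem_nhds lam₀ one_pos)
    (Filter.Eventually.of_forall hmeas) hF_int hmeas' hbound_ae hbound_int hdiff
  exact this.2.differentiableAt
end

section
/- The function Z : ℂ → ℂ defined by Z(λ) = ∫_0^∞ x^λ e^{−x − 1/x} dx satisfies the linear difference equation Z(λ + 2) − (λ + 2)·Z(λ + 1) − Z(λ) = 0 for every λ ∈ ℂ. -/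
open MeasureTheory Set Filter Real

noncomputable def gZ (μ : ℂ) (x : ℝ) : ℂ :=
  Complex.exp (μ * Real.log x) * Real.exp (-x - 1 / x)

lemma exp_neg_inv_le (n : ℕ) {x : ℝ} (hx : 0 < x) :
    Real.exp (-(1 / x)) ≤ (n.factorial : ℝ) * x ^ n := by
  rw [Real.exp_neg, inv_le_comm₀ (Real.exp_pos _) (by positivity)]
  have h := Real.pow_div_factorial_le_exp (x := 1 / x) (by positivity) n
  calc (((n.factorial : ℝ) : ℝ) * x ^ n)⁻¹ = (1 / x) ^ n / (n.factorial : ℝ) := by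
        rw [one_div, inv_pow, div_eq_mul_inv, mul_inv, mul_comm]
    _ ≤ Real.exp (1 / x) := h

lemma norm_gZ {μ : ℂ} {x : ℝ} (hx : 0 < x) :
    ‖gZ μ x‖ = x ^ μ.re * (Real.exp (-x) * Real.exp (-(1 / x))) := by
  unfold gZ
  rw [norm_mul, Complex.norm_exp,
    Complex.norm_real, Real.norm_eq_abs, Real.abs_exp]
  have : (μ * (Real.log x : ℂ)).re = μ.re * Real.log x := by
    simp [Complex.mul_re]
  rw [this, Real.rpow_def_of_pos hx, ← Real.exp_add, ← Real.exp_add, ← Real.exp_add]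
  congr 1
  ring

lemma norm_gZ_le (μ : ℂ) (n : ℕ) {x : ℝ} (hx : 0 < x) :
    ‖gZ μ x‖ ≤ (n.factorial : ℝ) * (Real.exp (-x) * x ^ (μ.re + n)) := by
  rw [norm_gZ hx]
  have h1 : Real.exp (-(1 / x)) ≤ (n.factorial : ℝ) * x ^ n := exp_neg_inv_le n hx
  have h2 : x ^ (μ.re + n) = x ^ μ.re * x ^ (n : ℝ) := Real.rpow_add hx _ _
  rw [h2, Real.rpow_natCast]
  calc x ^ μ.re * (Real.exp (-x) * Real.exp (-(1 / x)))
      ≤ x ^ μ.re * (Real.exp (-x) * ((n.factorial : ℝ) * x ^ n)) := by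
        apply mul_le_mul_of_nonneg_left _ (Real.rpow_nonneg hx.le _)
        exact mul_le_mul_of_nonneg_left h1 (Real.exp_pos _).le
    _ = (n.factorial : ℝ) * (Real.exp (-x) * (x ^ μ.re * x ^ n)) := by ring

lemma continuousOn_gZ (μ : ℂ) : ContinuousOn (gZ μ) (Ioi (0 : ℝ)) := by
  have hlog : ContinuousOn (fun x : ℝ => (Real.log x : ℂ)) (Ioi (0 : ℝ)) :=
    Complex.continuous_ofReal.comp_continuousOn
      (Real.continuousOn_log.mono (fun x hx => ne_of_gt hx))
  have h1 : ContinuousOn (fun x : ℝ => Complex.exp (μ * Real.log x)) (Ioi (0 : ℝ)) :=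
    Complex.continuous_exp.comp_continuousOn (hlog.const_smul μ)
  have h2 : ContinuousOn (fun x : ℝ => ((Real.exp (-x - 1 / x) : ℝ) : ℂ)) (Ioi (0 : ℝ)) := by
    apply Complex.continuous_ofReal.comp_continuousOn
    apply Real.continuous_exp.comp_continuousOn
    exact (continuousOn_id.neg).sub
      (continuousOn_const.div continuousOn_id fun x hx => ne_of_gt hx)
  exact h1.mul h2

lemma integrable_gZ (μ : ℂ) : IntegrableOn (gZ μ) (Ioi (0 : ℝ)) := by
  set n : ℕ := ⌊|μ.re|⌋₊ + 1 with hn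
  have hlt : |μ.re| < (n : ℝ) := by rw [hn]; push_cast; exact Nat.lt_floor_add_one _
  have hs : 0 < μ.re + n + 1 := by
    have := neg_abs_le μ.re; linarith
  have hmaj : IntegrableOn (fun x : ℝ => ((n.factorial : ℝ) : ℝ) * (Real.exp (-x) * x ^ (μ.re + n)))
      (Ioi (0 : ℝ)) := by
    have h := (Real.GammaIntegral_convergent hs).const_mul ((n.factorial : ℝ) : ℝ)
    have : μ.re + ↑n + 1 - 1 = μ.re + n := by ring
    rwa [this] at h
  apply Integrable.mono' hmaj
  · exact (continuousOn_gZ μ).aestronglyMeasurable measurableSet_Ioi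
  · filter_upwards [ae_restrict_mem measurableSet_Ioi] with x hx
    exact norm_gZ_le μ n hx

noncomputable def IZ (μ : ℂ) : ℂ := ∫ x in Ioi (0 : ℝ), gZ μ x

lemma cexp_shift {μ : ℂ} {x : ℝ} (hx : 0 < x) :
    Complex.exp ((μ + 1) * Real.log x) = Complex.exp (μ * Real.log x) * x := by
  rw [add_mul, one_mul, Complex.exp_add]
  congr 1
  rw [← Complex.ofReal_exp, Real.exp_log hx]

lemma key_ftc (lam : ℂ) :
    (lam + 1) * IZ lam - IZ (lam + 1) + IZ (lam - 1) = 0 := by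
  set F : ℝ → ℂ := fun x => if x ≤ 0 then 0 else gZ (lam + 1) x with hF
  set f' : ℝ → ℂ := fun x => (lam + 1) * gZ lam x - gZ (lam + 1) x + gZ (lam - 1) x with hf'
  set r : ℝ := (lam + 1).re with hr
  set n : ℕ := ⌊|r|⌋₊ + 1 with hn
  have hrn : 0 < r + n := by
    have h1 : |r| < (n : ℝ) := by rw [hn]; push_cast; exact Nat.lt_floor_add_one _
    have := neg_abs_le r; linarith
  -- continuity at 0 within Ici 0
  have hcont : ContinuousWithinAt F (Ici (0 : ℝ)) 0 := by
    have hF0 : F 0 = 0 := by simp [hF]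
    rw [ContinuousWithinAt, hF0]
    have hbound : ∀ x ∈ Ici (0 : ℝ), ‖F x‖ ≤ ((n.factorial : ℝ) : ℝ) * x ^ (r + n) := by
      intro x hx
      rcases le_or_gt x 0 with h | h
      · have hx0 : x = 0 := le_antisymm h hx
        simp [hF, hx0, Real.zero_rpow (ne_of_gt hrn)]
      · have : F x = gZ (lam + 1) x := by simp [hF, not_le.mpr h]
        rw [this]
        calc ‖gZ (lam + 1) x‖ ≤ (n.factorial : ℝ) * (Real.exp (-x) * x ^ (r + n)) := norm_gZ_le _ n h
          _ ≤ (n.factorial : ℝ) * (1 * x ^ (r + n)) := by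
              apply mul_le_mul_of_nonneg_left _ (by positivity)
              apply mul_le_mul_of_nonneg_right _ (Real.rpow_nonneg h.le _)
              exact Real.exp_le_one_iff.mpr (by linarith)
          _ = (n.factorial : ℝ) * x ^ (r + n) := by rw [one_mul]
    have hB : Tendsto (fun x : ℝ => ((n.factorial : ℝ) : ℝ) * x ^ (r + n)) (nhdsWithin 0 (Ici (0:ℝ))) (nhds 0) := by
      have h0 : Tendsto (fun x : ℝ => x ^ (r + n)) (nhds 0) (nhds ((0:ℝ) ^ (r + n))) :=
        (Real.continuousAt_rpow_const 0 (r + n) (Or.inr hrn.le)).tendsto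
      rw [Real.zero_rpow (ne_of_gt hrn)] at h0
      have h1 : Tendsto (fun x : ℝ => (n.factorial : ℝ) * x ^ (r + n))
          (nhdsWithin 0 (Ici (0:ℝ))) (nhds ((n.factorial : ℝ) * 0)) :=
        (h0.const_mul _).mono_left nhdsWithin_le_nhds
      simpa using h1
    apply squeeze_zero_norm' _ hB
    filter_upwards [self_mem_nhdsWithin] with x hx using hbound x hx
  -- derivative on Ioi 0
  have hderiv : ∀ x ∈ Ioi (0 : ℝ), HasDerivAt F (f' x) x := by
    intro x hx
    rw [mem_Ioi] at hx
    have hxC : (x : ℂ) ≠ 0 := Complex.ofReal_ne_zero.mpr (ne_of_gt hx)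
    have h1 : HasDerivAt (fun y : ℝ => Complex.exp ((lam + 1) * Real.log y))
        (((lam + 1) * (x : ℂ)⁻¹) * Complex.exp ((lam + 1) * Real.log x)) x := by
      have hl : HasDerivAt (fun y : ℝ => ((Real.log y : ℝ) : ℂ)) ((x⁻¹ : ℝ) : ℂ) x :=
        (Real.hasDerivAt_log (ne_of_gt hx)).ofReal_comp
      have := (hl.const_mul (lam + 1)).cexp
      simpa [mul_comm, mul_assoc, Complex.ofReal_inv] using this
    have h2 : HasDerivAt (fun y : ℝ => ((Real.exp (-y - 1 / y) : ℝ) : ℂ))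
        ((((Real.exp (-x - 1 / x) * (-1 + 1 / x ^ 2)) : ℝ)) : ℂ) x := by
      have hinner : HasDerivAt (fun y : ℝ => -y - 1 / y) (-1 + 1 / x ^ 2) x := by
        have h := ((hasDerivAt_id x).neg.sub ((hasDerivAt_inv (ne_of_gt hx)).const_mul 1))
        simp only [one_mul, mul_neg] at h
        convert h using 1
        · rfl
        · rfl
        · ext y; simp [one_div]
        · field_simp; ring
      exact (hinner.exp).ofReal_comp
    have hprod := h1.mul h2
    have hmain : HasDerivAt (fun y : ℝ =>
        Complex.exp ((lam + 1) * Real.log y) * Real.exp (-y - 1 / y)) (f' x) x := by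
      convert hprod using 1
      · rfl
      · rfl
      have e1 : Complex.exp ((lam + 1) * Real.log x)
          = Complex.exp (lam * Real.log x) * x := cexp_shift hx
      have e2 : Complex.exp (lam * Real.log x)
          = Complex.exp ((lam - 1) * Real.log x) * x := by
        have := cexp_shift (μ := lam - 1) hx
        rwa [sub_add_cancel] at this
      simp only [hf', gZ, e1, e2]
      push_cast
      have hx2 : ((x : ℂ)) ^ 2 ≠ 0 := pow_ne_zero 2 hxC
      field_simp
      ring
    apply hmain.congr_of_eventuallyEq
    filter_upwards [eventually_gt_nhds hx] with y hy
    simp [hF, not_le.mpr hy, gZ]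
  -- integrability of f'
  have hint : IntegrableOn f' (Ioi (0 : ℝ)) := by
    exact (((integrable_gZ lam).const_mul _).sub (integrable_gZ (lam + 1))).add
      (integrable_gZ (lam - 1))
  -- limit at infinity
  have htop : Tendsto F atTop (nhds (0 : ℂ)) := by
    apply squeeze_zero_norm' _ (tendsto_rpow_mul_exp_neg_mul_atTop_nhds_zero r 1 one_pos)
    filter_upwards [eventually_gt_atTop (0 : ℝ)] with x hx
    have : F x = gZ (lam + 1) x := by simp [hF, not_le.mpr hx]
    rw [this, norm_gZ hx]
    have h1 : Real.exp (-(1 / x)) ≤ 1 := Real.exp_le_one_iff.mpr (neg_nonpos.mpr (by positivity))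
    have : Real.exp (-x) * Real.exp (-(1 / x)) ≤ Real.exp (-x) :=
      le_trans (mul_le_mul_of_nonneg_left h1 (Real.exp_pos _).le) (le_of_eq (mul_one _))
    calc x ^ r * (Real.exp (-x) * Real.exp (-(1 / x)))
        ≤ x ^ r * Real.exp (-x) :=
          mul_le_mul_of_nonneg_left this (Real.rpow_nonneg hx.le _)
      _ = x ^ r * Real.exp (-1 * x) := by rw [neg_one_mul]
  have hFTC := integral_Ioi_of_hasDerivAt_of_tendsto hcont hderiv hint htop
  have hF0 : F 0 = 0 := by simp [hF]
  rw [hF0, sub_zero] at hFTC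
  have hsplit : ∫ x in Ioi (0:ℝ), f' x
      = (lam + 1) * IZ lam - IZ (lam + 1) + IZ (lam - 1) := by
    have hi0 : Integrable (fun x : ℝ => (lam + 1) * gZ lam x)
        (volume.restrict (Ioi (0:ℝ))) := (integrable_gZ lam).const_mul _
    have hi1 : Integrable (fun x : ℝ => (lam + 1) * gZ lam x - gZ (lam + 1) x)
        (volume.restrict (Ioi (0:ℝ))) := hi0.sub (integrable_gZ (lam + 1))
    simp only [hf']
    rw [integral_add hi1 (integrable_gZ (lam - 1)), integral_sub hi0 (integrable_gZ (lam + 1)),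
      integral_const_mul]
    rfl
  rw [hsplit] at hFTC
  exact hFTC

/-- The local zeta function `Z(λ) = ∫_0^∞ x^λ e^{−x−1/x} dx` satisfies the difference
equation `Z(λ+2) − (λ+2) Z(λ+1) − Z(λ) = 0`. -/
theorem statement16 (Z : ℂ → ℂ)
    (hZ : ∀ lam : ℂ, Z lam =
      ∫ x in Set.Ioi (0 : ℝ),
        Complex.exp (lam * Real.log x) * Real.exp (-x - 1 / x)) :
    ∀ lam : ℂ, Z (lam + 2) - (lam + 2) * Z (lam + 1) - Z lam = 0 := by
  intro lam
  have hZI : ∀ μ : ℂ, Z μ = IZ μ := fun μ => hZ μ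
  have key := key_ftc (lam + 1)
  have e1 : lam + 1 + 1 = lam + 2 := by ring
  have e2 : lam + 1 - 1 = lam := by ring
  rw [e1, e2] at key
  rw [hZI, hZI, hZI]
  linear_combination -key
end
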